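/- Let $G$ be a topological group in which every 3-generated subgroup is discrete. Then $G$ is 2-swelling: for all compact $A, B \subseteq G$ and elements $a, b, c \in G$, the inclusions $aA \cup bB \subseteq A \cup B$ and $aA \cap bB \subseteq c(A \cap B)$ imply the equalities $aA \cup bB = A \cup B$ and $aA \cap bB = c(A \cap B)$. -/

import Mathlib

open Pointwise

/-- A set that is uniformly separated (distinct points have quotient outside a
neighborhood of 1) meets every compact set in a finite set. -/
lemma finite_inter_of_separated {G : Type*} [Group G] [TopologicalSpace G]
    [IsTopologicalGroup G] {U : Set G} (hU : U ∈ nhds (1 : G)) {S K : Set G}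
    (hK : IsCompact K) (hsep : ∀ s ∈ S, ∀ t ∈ S, s * t⁻¹ ∈ U → s = t) :
    (K ∩ S).Finite := by
  obtain ⟨V, V_open, V_mem, hV⟩ := exists_open_nhds_one_mul_subset hU
  set W : Set G := V ∩ V⁻¹ with hW
  have W_open : IsOpen W := V_open.inter V_open.inv
  have W_mem : (1 : G) ∈ W := ⟨V_mem, by simp [V_mem]⟩
  have hWU : ∀ w₁ ∈ W, ∀ w₂ ∈ W, w₁ * w₂⁻¹ ∈ U := by
    intro w₁ hw₁ w₂ hw₂
    exact hV (Set.mul_mem_mul hw₁.1 hw₂.2)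
  have hcover : K ⊆ ⋃ g ∈ K, W * {g} := by
    intro g hg
    exact Set.mem_biUnion hg ⟨1, W_mem, g, rfl, by simp⟩
  obtain ⟨T, hTK, hTfin, hTcov⟩ := hK.elim_finite_subcover_image
    (fun g _ => W_open.mul_right) hcover
  have : K ∩ S ⊆ ⋃ g ∈ T, (W * {g}) ∩ S := by
    intro y hy
    obtain ⟨g, hg, hyg⟩ := Set.mem_iUnion₂.1 (hTcov hy.1)
    exact Set.mem_biUnion hg ⟨hyg, hy.2⟩
  refine Set.Finite.subset (Set.Finite.biUnion hTfin ?_) this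
  intro g _
  apply Set.Subsingleton.finite
  rintro s ⟨⟨w₁, hw₁, g₁, hg₁, rfl⟩, hs⟩ t ⟨⟨w₂, hw₂, g₂, hg₂, rfl⟩, ht⟩
  refine hsep _ hs _ ht ?_
  have hgg : g₁ = g₂ := by
    rw [Set.mem_singleton_iff] at hg₁ hg₂; rw [hg₁, hg₂]
  rw [hgg]
  have heq : (w₁ * g₂) * (w₂ * g₂)⁻¹ = w₁ * w₂⁻¹ := by group
  rw [heq]; exact hWU _ hw₁ _ hw₂

/-- Key pointwise lemma: restricting to the orbit of a base point `x` under the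
discrete subgroup generated by `a, b, c`, the inclusions become equalities on the
(finite) traces. -/
lemma swell_key {G : Type*} [Group G] [TopologicalSpace G] [IsTopologicalGroup G]
    (hd : ∀ a b c : G, DiscreteTopology (Subgroup.closure {a, b, c}))
    (A B : Set G) (hA : IsCompact A) (hB : IsCompact B) (a b c : G)
    (h1 : a • A ∪ b • B ⊆ A ∪ B) (h2 : a • A ∩ b • B ⊆ c • (A ∩ B)) (x : G) :
    a • (A ∩ ((· * x) '' (Subgroup.closure {a, b, c} : Set G)))
        ∪ b • (B ∩ ((· * x) '' (Subgroup.closure {a, b, c} : Set G)))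
      = (A ∪ B) ∩ ((· * x) '' (Subgroup.closure {a, b, c} : Set G)) ∧
    a • (A ∩ ((· * x) '' (Subgroup.closure {a, b, c} : Set G)))
        ∩ b • (B ∩ ((· * x) '' (Subgroup.closure {a, b, c} : Set G)))
      = c • (A ∩ B ∩ ((· * x) '' (Subgroup.closure {a, b, c} : Set G))) := by
  set H := Subgroup.closure ({a, b, c} : Set G) with hH
  haveI := hd a b c
  set O : Set G := (· * x) '' (H : Set G) with hO
  -- discreteness gives a separating neighborhood
  obtain ⟨U, U_open, hU1⟩ : ∃ U : Set G, IsOpen U ∧ Subtype.val ⁻¹' U = ({1} : Set H) := by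
    have : IsOpen ({1} : Set H) := isOpen_discrete _
    rw [isOpen_induced_iff] at this
    obtain ⟨U, hU, hU'⟩ := this
    exact ⟨U, hU, hU'⟩
  have hU_mem : U ∈ nhds (1 : G) := by
    refine U_open.mem_nhds ?_
    have : ((1 : H) : G) ∈ U := by
      have : (1 : H) ∈ Subtype.val ⁻¹' U := by rw [hU1]; rfl
      exact this
    simpa using this
  have hUH : ∀ h : G, h ∈ H → h ∈ U → h = 1 := by
    intro h hh hU
    have : (⟨h, hh⟩ : H) ∈ Subtype.val ⁻¹' U := hU
    rw [hU1] at this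
    exact congrArg Subtype.val this
  -- O is uniformly separated
  have hsep : ∀ s ∈ O, ∀ t ∈ O, s * t⁻¹ ∈ U → s = t := by
    rintro s ⟨h₁, hh₁, rfl⟩ t ⟨h₂, hh₂, rfl⟩ hst
    have heq : (h₁ * x) * (h₂ * x)⁻¹ = h₁ * h₂⁻¹ := by group
    rw [heq] at hst
    have : h₁ * h₂⁻¹ = 1 := hUH _ (mul_mem hh₁ (inv_mem hh₂)) hst
    have : h₁ = h₂ := by
      have := mul_inv_eq_one.mp this
      exact this
    simp [this]
  -- finiteness of traces
  have hAfin : (A ∩ O).Finite := finite_inter_of_separated hU_mem hA hsep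
  have hBfin : (B ∩ O).Finite := finite_inter_of_separated hU_mem hB hsep
  -- generators lie in H
  have haH : a ∈ H := Subgroup.subset_closure (by simp)
  have hbH : b ∈ H := Subgroup.subset_closure (by simp)
  have hcH : c ∈ H := Subgroup.subset_closure (by simp)
  -- orbit compatibility
  have horb : ∀ g : G, g ∈ H → ∀ S : Set G, g • (S ∩ O) = (g • S) ∩ O := by
    intro g hg S
    ext y
    constructor
    · rintro ⟨z, ⟨hzS, h₁, hh₁, rfl⟩, rfl⟩
      refine ⟨⟨_, hzS, rfl⟩, g * h₁, mul_mem hg hh₁, by simp [mul_assoc]⟩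
    · rintro ⟨⟨z, hzS, rfl⟩, h₁, hh₁, hy⟩
      refine ⟨z, ⟨hzS, g⁻¹ * h₁, mul_mem (inv_mem hg) hh₁, ?_⟩, rfl⟩
      have hy' : h₁ * x = g * z := hy
      have : z = g⁻¹ * (h₁ * x) := by rw [hy']; group
      rw [this]; simp [mul_assoc]
  -- restricted inclusions
  have key1 : a • (A ∩ O) ∪ b • (B ∩ O) ⊆ (A ∪ B) ∩ O := by
    rw [horb a haH, horb b hbH]
    rintro y (⟨hy, hyO⟩ | ⟨hy, hyO⟩)
    · exact ⟨h1 (Or.inl hy), hyO⟩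
    · exact ⟨h1 (Or.inr hy), hyO⟩
  have key2 : a • (A ∩ O) ∩ b • (B ∩ O) ⊆ c • (A ∩ B ∩ O) := by
    rw [horb a haH, horb b hbH, horb c hcH]
    rintro y ⟨⟨hy1, hyO⟩, ⟨hy2, _⟩⟩
    exact ⟨h2 ⟨hy1, hy2⟩, hyO⟩
  -- counting
  have hABfin : (A ∩ B ∩ O).Finite := hAfin.subset (by intro y hy; exact ⟨hy.1.1, hy.2⟩)
  have hUfin : ((A ∪ B) ∩ O).Finite := by
    have : (A ∪ B) ∩ O = (A ∩ O) ∪ (B ∩ O) := by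
      rw [Set.union_inter_distrib_right]
    rw [this]; exact hAfin.union hBfin
  have haAfin : (a • (A ∩ O)).Finite := hAfin.smul_set
  have hbBfin : (b • (B ∩ O)).Finite := hBfin.smul_set
  have hsum :
      (a • (A ∩ O) ∪ b • (B ∩ O)).ncard + (a • (A ∩ O) ∩ b • (B ∩ O)).ncard
        = ((A ∪ B) ∩ O).ncard + (A ∩ B ∩ O).ncard := by
    rw [Set.ncard_union_add_ncard_inter _ _ haAfin hbBfin,
      Set.ncard_smul_set, Set.ncard_smul_set]
    have h1' : (A ∪ B) ∩ O = (A ∩ O) ∪ (B ∩ O) := by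
      rw [Set.union_inter_distrib_right]
    have h2' : A ∩ B ∩ O = (A ∩ O) ∩ (B ∩ O) := by
      ext y; constructor
      · rintro ⟨⟨h1, h2⟩, h3⟩; exact ⟨⟨h1, h3⟩, ⟨h2, h3⟩⟩
      · rintro ⟨⟨h1, h3⟩, ⟨h2, _⟩⟩; exact ⟨⟨h1, h2⟩, h3⟩
    rw [h1', h2', Set.ncard_union_add_ncard_inter _ _ hAfin hBfin]
  have hle1 : (a • (A ∩ O) ∪ b • (B ∩ O)).ncard ≤ ((A ∪ B) ∩ O).ncard :=
    Set.ncard_le_ncard key1 hUfin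
  have hle2 : (a • (A ∩ O) ∩ b • (B ∩ O)).ncard ≤ (c • (A ∩ B ∩ O)).ncard :=
    Set.ncard_le_ncard key2 hABfin.smul_set
  rw [Set.ncard_smul_set] at hle2
  have heq1 : (a • (A ∩ O) ∪ b • (B ∩ O)).ncard = ((A ∪ B) ∩ O).ncard := by omega
  have heq2 : (a • (A ∩ O) ∩ b • (B ∩ O)).ncard = (A ∩ B ∩ O).ncard := by omega
  constructor
  · exact Set.eq_of_subset_of_ncard_le key1 heq1.ge hUfin
  · refine Set.eq_of_subset_of_ncard_le key2 ?_ hABfin.smul_set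
    rw [Set.ncard_smul_set]; exact heq2.ge

theorem stmt_7 {G : Type*} [Group G] [TopologicalSpace G] [IsTopologicalGroup G]
    (hd : ∀ a b c : G, DiscreteTopology (Subgroup.closure {a, b, c}))
    (A B : Set G) (hA : IsCompact A) (hB : IsCompact B) (a b c : G)
    (h1 : a • A ∪ b • B ⊆ A ∪ B) (h2 : a • A ∩ b • B ⊆ c • (A ∩ B)) :
    a • A ∪ b • B = A ∪ B ∧ a • A ∩ b • B = c • (A ∩ B) := by
  constructor
  · refine Set.Subset.antisymm h1 ?_
    intro x hx
    obtain ⟨hk1, -⟩ := swell_key hd A B hA hB a b c h1 h2 x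
    have hxO : x ∈ (· * x) '' ((Subgroup.closure {a, b, c} : Subgroup G) : Set G) :=
      ⟨1, one_mem _, by simp⟩
    have : x ∈ a • (A ∩ _) ∪ b • (B ∩ _) := hk1.symm.subset ⟨hx, hxO⟩
    rcases this with ⟨z, ⟨hz, _⟩, rfl⟩ | ⟨z, ⟨hz, _⟩, rfl⟩
    · exact Or.inl ⟨z, hz, rfl⟩
    · exact Or.inr ⟨z, hz, rfl⟩
  · refine Set.Subset.antisymm h2 ?_
    rintro _ ⟨y, hy, rfl⟩
    obtain ⟨-, hk2⟩ := swell_key hd A B hA hB a b c h1 h2 y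
    have hyO : y ∈ (· * y) '' ((Subgroup.closure {a, b, c} : Subgroup G) : Set G) :=
      ⟨1, one_mem _, by simp⟩
    have : c • y ∈ a • (A ∩ _) ∩ b • (B ∩ _) :=
      hk2.symm.subset ⟨y, ⟨hy, hyO⟩, rfl⟩
    rcases this with ⟨⟨z, ⟨hz, _⟩, hza⟩, ⟨w, ⟨hw, _⟩, hwb⟩⟩
    exact ⟨⟨z, hz, hza⟩, ⟨w, hw, hwb⟩⟩
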